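/- Let G' be the transformed graph of G and V_G ⊆ V_{G'} the copy of the original vertex set. For every tree t, the number of no-tottering tree-patterns of G with respect to t equals the number of tree-patterns of G' with respect to t whose root is mapped into V_G: ψ_t^{NT}(G) = Σ_{v ∈ V_G} ψ_t^{(v)}(G'). -/

import Mathlib

open scoped Classical

/-- A finite labeled directed graph: vertices `V`, edge relation `E`, vertex
labels `lv` and edge labels `le`, all labels taken in the alphabet `A`. -/
structure LGraph (A : Type) where
  V : Type
  [fintypeV : Fintype V]
  [decEqV : DecidableEq V]
  E : V → V → Prop
  [decE : DecidableRel E]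
  lv : V → A
  le : V → V → A

attribute [instance] LGraph.fintypeV LGraph.decEqV LGraph.decE

/-- A labeled rooted tree: a root label together with the list of children,
each child carrying the label of the edge connecting it to its parent and
the corresponding labeled subtree. -/
inductive LTree (A : Type) : Type where
  | node : A → List (A × LTree A) → LTree A

namespace LTree

variable {A : Type}

-- `size t` : number of nodes
mutual
def size : LTree A → ℕ
  | .node _ cs => 1 + sizeList cs
def sizeList : List (A × LTree A) → ℕ
  | [] => 0
  | (_, t) :: rest => size t + sizeList rest
end

-- `depth t` : maximal number of edges from the root to a node, plus one
mutual
def depth : LTree A → ℕ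
  | .node _ cs => 1 + depthList cs
def depthList : List (A × LTree A) → ℕ
  | [] => 0
  | (_, t) :: rest => max (depth t) (depthList rest)
end

-- `leaves t` : number of leaf nodes
mutual
def leaves : LTree A → ℕ
  | .node _ [] => 1
  | .node _ (c :: cs) => leavesList (c :: cs)
def leavesList : List (A × LTree A) → ℕ
  | [] => 0
  | (_, t) :: rest => leaves t + leavesList rest
end

/-- branching cardinality: number of leaves minus one -/
def branch (t : LTree A) : ℕ := t.leaves - 1

-- `balanced t h` : `t` is perfectly depth-balanced of order `h` (every leaf at depth `h`)
mutual
def balanced : LTree A → ℕ → Prop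
  | .node _ [], h => h = 1
  | .node _ (c :: cs), h => balancedList (c :: cs) (h - 1) ∧ 2 ≤ h
def balancedList : List (A × LTree A) → ℕ → Prop
  | [], _ => True
  | (_, t) :: rest, h => balanced t h ∧ balancedList rest h
end

end LTree

/-- A tree of graph vertices: the candidate images of the nodes of a tree
under a tree-pattern. -/
inductive VTree (V : Type) : Type where
  | node : V → List (VTree V) → VTree V

namespace VTree

variable {V : Type}

/-- the vertex at the root -/
def root : VTree V → V
  | .node u _ => u

/-- the list of subtrees at the root -/
def children : VTree V → List (VTree V)
  | .node _ ps => ps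

end VTree

/-- `isPattern G t p` : the decoration `p` of the tree `t` by vertices of `G` is a
tree-pattern of `G` with respect to `t`: node labels match, every tree edge is
realized by an edge of `G` with matching label, and sibling nodes are mapped to
distinct vertices. -/
def isPattern {A : Type} (G : LGraph A) : LTree A → VTree G.V → Prop
  | .node a cs, .node u ps =>
    G.lv u = a ∧ ps.length = cs.length ∧
    (∀ i j : Fin ps.length, i ≠ j → (ps.get i).root ≠ (ps.get j).root) ∧
    ∀ i : Fin ps.length, ∀ (h : (i : ℕ) < cs.length),
      G.E u (ps.get i).root ∧ G.le u (ps.get i).root = (cs.get ⟨i, h⟩).1 ∧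
      isPattern G (cs.get ⟨i, h⟩).2 (ps.get i)
termination_by _ p => sizeOf p
decreasing_by
  have h1 : sizeOf (ps.get i) < sizeOf ps := List.sizeOf_lt_of_mem (ps.get_mem i)
  simp only [VTree.node.sizeOf_spec]
  omega

/-- `psiRoot G t u` : number of tree-patterns of `G` with respect to `t` rooted at `u`. -/
noncomputable def psiRoot {A : Type} (G : LGraph A) (t : LTree A) (u : G.V) : ℕ :=
  Set.ncard {p : VTree G.V | isPattern G t p ∧ p.root = u}

/-- `psi G t` : number of tree-patterns of `G` with respect to `t`. -/
noncomputable def psi {A : Type} (G : LGraph A) (t : LTree A) : ℕ :=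
  Set.ncard {p : VTree G.V | isPattern G t p}

/-- The transformed graph `G'` of `G`: its vertices are the vertices and the edges
of `G`; there is an edge from `v` to `(v,t)` for every edge `(v,t)` of `G`, and an
edge from `(u,v)` to `(v,t)` for every pair of consecutive edges of `G` with `u ≠ t`.
A vertex `(u,v)` is labeled by `l(v)` and any edge pointing to `(v,t)` by `l((v,t))`. -/
noncomputable def transform {A : Type} (G : LGraph A) : LGraph A where
  V := G.V ⊕ {p : G.V × G.V // G.E p.1 p.2}
  fintypeV :=
    have : Finite {p : G.V × G.V // G.E p.1 p.2} := Subtype.finite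
    have : Fintype {p : G.V × G.V // G.E p.1 p.2} := Fintype.ofFinite _
    inferInstance
  decEqV := Classical.decEq _
  E := fun x y =>
    match x, y with
    | Sum.inl v, Sum.inr e => e.1.1 = v
    | Sum.inr e, Sum.inr e' => e'.1.1 = e.1.2 ∧ e.1.1 ≠ e'.1.2
    | _, _ => False
  decE := Classical.decRel _
  lv := fun x =>
    match x with
    | Sum.inl v => G.lv v
    | Sum.inr e => G.lv e.1.2
  le := fun _ y =>
    match y with
    | Sum.inl v => G.lv v
    | Sum.inr e => G.le e.1.1 e.1.2

namespace VTree

variable {V : Type}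

-- `noTot p` : the decorated tree (tree-pattern) `p` is no-tottering: no vertex
-- appears simultaneously as the parent and a child of a second vertex, i.e. for
-- every node, the vertex at this node differs from the vertices at its grandchildren
-- along each branch.
mutual
def noTot : VTree V → Prop
  | .node u ps => (∀ p ∈ ps, ∀ q ∈ p.children, u ≠ q.root) ∧ noTotList ps
def noTotList : List (VTree V) → Prop
  | [] => True
  | p :: rest => noTot p ∧ noTotList rest
end

-- `rootLeafWalks p` : the list of vertex sequences of `p` along the paths from the
-- root to the leaves.
mutual
def rootLeafWalks : VTree V → List (List V)
  | .node u [] => [[u]]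
  | .node u (p :: ps) => (rootLeafWalksList (p :: ps)).map (u :: ·)
def rootLeafWalksList : List (VTree V) → List (List V)
  | [] => []
  | p :: rest => rootLeafWalks p ++ rootLeafWalksList rest
end

end VTree

/-- a list of vertices is a walk of `G` -/
def isWalkList {A : Type} (G : LGraph A) (l : List G.V) : Prop :=
  ∀ i, (h : i + 1 < l.length) → G.E (l.get ⟨i, by omega⟩) (l.get ⟨i + 1, h⟩)

/-- a list of vertices is no-tottering: entries two steps apart are distinct -/
def noTotList' {V : Type} (l : List V) : Prop :=
  ∀ i, (h : i + 2 < l.length) → l.get ⟨i, by omega⟩ ≠ l.get ⟨i + 2, h⟩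

/-- `psiNT G t` : number of no-tottering tree-patterns of `G` with respect to `t`. -/
noncomputable def psiNT {A : Type} (G : LGraph A) (t : LTree A) : ℕ :=
  Set.ncard {p : VTree G.V | isPattern G t p ∧ p.noTot}

namespace Stmt17

variable {A : Type}

/-- extract the underlying `G`-vertex of a vertex of the transformed graph -/
def vx (G : LGraph A) : (transform G).V → G.V
  | .inl v => v
  | .inr e => e.1.2

mutual
def prj (G : LGraph A) : VTree (transform G).V → VTree G.V
  | .node x qs => .node (vx G x) (prjList G qs)
def prjList (G : LGraph A) : List (VTree (transform G).V) → List (VTree G.V)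
  | [] => []
  | q :: rest => prj G q :: prjList G rest
end

mutual
noncomputable def lift (G : LGraph A) (u : G.V) : VTree G.V → VTree (transform G).V
  | .node v qs =>
      .node (if h : G.E u v then .inr ⟨(u, v), h⟩ else .inl v) (liftList G v qs)
noncomputable def liftList (G : LGraph A) (v : G.V) :
    List (VTree G.V) → List (VTree (transform G).V)
  | [] => []
  | p :: rest => lift G v p :: liftList G v rest
end

noncomputable def liftRoot (G : LGraph A) : VTree G.V → VTree (transform G).V
  | .node u ps => .node (.inl u) (liftList G u ps)

theorem prjList_eq_map (G : LGraph A) (l : List (VTree (transform G).V)) :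
    prjList G l = l.map (prj G) := by
  induction l with
  | nil => rfl
  | cons q rest ih => rw [prjList, ih, List.map_cons]

theorem liftList_eq_map (G : LGraph A) (v : G.V) (l : List (VTree G.V)) :
    liftList G v l = l.map (lift G v) := by
  induction l with
  | nil => rfl
  | cons q rest ih => rw [liftList, ih, List.map_cons]

theorem root_lift (G : LGraph A) (u : G.V) (p : VTree G.V) (h : G.E u p.root) :
    (lift G u p).root = .inr ⟨(u, p.root), h⟩ := by
  cases p with
  | node v qs => rw [lift]; simp only [VTree.root] at h ⊢; exact dif_pos h

mutual
theorem prj_lift (G : LGraph A) (u : G.V) (p : VTree G.V) : prj G (lift G u p) = p := by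
  cases p with
  | node v qs =>
    rw [lift, prj, prjList_lift]
    congr 1
    by_cases hc : G.E u v
    · exact congrArg (vx G) (dif_pos hc)
    · exact congrArg (vx G) (dif_neg hc)
theorem prjList_lift (G : LGraph A) (v : G.V) (l : List (VTree G.V)) :
    prjList G (liftList G v l) = l := by
  cases l with
  | nil => rfl
  | cons p rest => rw [liftList, prjList, prj_lift, prjList_lift]
end

theorem prj_liftRoot (G : LGraph A) (p : VTree G.V) : prj G (liftRoot G p) = p := by
  cases p with
  | node u ps => rw [liftRoot]; erw [prj, prjList_lift]; rfl

end Stmt17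
namespace Stmt17

theorem noTotList_mem {V : Type} {l : List (VTree V)} (h : VTree.noTotList l)
    {p : VTree V} (hp : p ∈ l) : p.noTot := by
  induction l with
  | nil => cases hp
  | cons q rest ih =>
    rw [VTree.noTotList] at h
    rcases List.mem_cons.mp hp with h' | h'
    · exact h' ▸ h.1
    · exact ih h.2 h'

theorem snd_sizeOf_lt {A : Type} (pr : A × LTree A) : sizeOf pr.2 < sizeOf pr := by
  cases pr; simp only [Prod.mk.sizeOf_spec]; omega

theorem lift_isPattern {A : Type} (G : LGraph A) (t : LTree A) (u : G.V) (p : VTree G.V)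
    (hpat : isPattern G t p) (hE : G.E u p.root)
    (hch : ∀ q ∈ p.children, u ≠ q.root) (hnt : p.noTot) :
    isPattern (transform G) t (lift G u p) := by
  match t, p with
  | .node a cs, .node v ps =>
    simp only [VTree.root] at hE
    simp only [VTree.children] at hch
    rw [VTree.noTot] at hnt
    rw [isPattern] at hpat
    obtain ⟨h1, h2, h3, h4⟩ := hpat
    simp only [List.get_eq_getElem] at h3 h4
    have h3' : ∀ i j, (hi : i < ps.length) → (hj : j < ps.length) → i ≠ j →
        ps[i].root ≠ ps[j].root := fun i j hi hj hne =>
      h3 ⟨i, hi⟩ ⟨j, hj⟩ (fun hc => hne (Fin.mk.inj_iff.mp hc))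
    have h4' : ∀ i, (hi : i < ps.length) → (h : i < cs.length) →
        G.E v ps[i].root ∧ G.le v ps[i].root = cs[i].1 ∧ isPattern G cs[i].2 ps[i] :=
      fun i hi h => h4 ⟨i, hi⟩ h
    have hE4 : ∀ i, (hi : i < ps.length) → G.E v ps[i].root :=
      fun i hi => (h4' i hi (h2 ▸ hi)).1
    rw [lift]; erw [dif_pos hE, isPattern.eq_1]
    simp only [liftList_eq_map, List.get_eq_getElem, List.getElem_map]
    have hlen : (ps.map (lift G v)).length = ps.length := List.length_map _
    have hlen1 : (liftList G v ps).length = ps.length := by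
      rw [liftList_eq_map]; exact hlen
    refine ⟨h1, by rw [hlen]; exact h2, ?_, ?_⟩
    · intro i j hij
      have hi : (i : ℕ) < ps.length := hlen1 ▸ i.isLt
      have hj : (j : ℕ) < ps.length := hlen1 ▸ j.isLt
      rw [root_lift G v _ (hE4 i hi), root_lift G v _ (hE4 j hj)]
      intro hcon
      exact h3' i j hi hj (fun hv => hij (Fin.ext hv))
        (congrArg (fun e => e.1.2) (Sum.inr.inj hcon))
    · intro i hcs
      have hi : (i : ℕ) < ps.length := hlen1 ▸ i.isLt
      rw [root_lift G v _ (hE4 i hi)]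
      refine ⟨⟨rfl, hch _ (List.getElem_mem _)⟩, (h4' i hi hcs).2.1, ?_⟩
      exact lift_isPattern G _ v _ ((h4' i hi hcs).2.2) (hE4 i hi)
        (fun q hq => hnt.1 _ (List.getElem_mem _) q hq)
        (noTotList_mem hnt.2 (List.getElem_mem _))
termination_by sizeOf t
decreasing_by
  simp only [LTree.node.sizeOf_spec]
  have h5 : sizeOf cs[(↑i : ℕ)] < sizeOf cs := List.sizeOf_lt_of_mem (List.getElem_mem _)
  have h6 := snd_sizeOf_lt cs[(↑i : ℕ)]
  omega

theorem liftRoot_isPattern {A : Type} (G : LGraph A) (t : LTree A) (p : VTree G.V)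
    (hpat : isPattern G t p) (hnt : p.noTot) :
    isPattern (transform G) t (liftRoot G p) := by
  match t, p with
  | .node a cs, .node u ps =>
    rw [VTree.noTot] at hnt
    rw [isPattern] at hpat
    obtain ⟨h1, h2, h3, h4⟩ := hpat
    simp only [List.get_eq_getElem] at h3 h4
    have h3' : ∀ i j, (hi : i < ps.length) → (hj : j < ps.length) → i ≠ j →
        ps[i].root ≠ ps[j].root := fun i j hi hj hne =>
      h3 ⟨i, hi⟩ ⟨j, hj⟩ (fun hc => hne (Fin.mk.inj_iff.mp hc))
    have h4' : ∀ i, (hi : i < ps.length) → (h : i < cs.length) →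
        G.E u ps[i].root ∧ G.le u ps[i].root = cs[i].1 ∧ isPattern G cs[i].2 ps[i] :=
      fun i hi h => h4 ⟨i, hi⟩ h
    have hE4 : ∀ i, (hi : i < ps.length) → G.E u ps[i].root :=
      fun i hi => (h4' i hi (h2 ▸ hi)).1
    rw [liftRoot]; erw [isPattern.eq_1]
    simp only [liftList_eq_map, List.get_eq_getElem, List.getElem_map]
    have hlen : (ps.map (lift G u)).length = ps.length := List.length_map _
    have hlen1 : (liftList G u ps).length = ps.length := by
      rw [liftList_eq_map]; exact hlen
    refine ⟨h1, by rw [hlen]; exact h2, ?_, ?_⟩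
    · intro i j hij
      have hi : (i : ℕ) < ps.length := hlen1 ▸ i.isLt
      have hj : (j : ℕ) < ps.length := hlen1 ▸ j.isLt
      rw [root_lift G u _ (hE4 i hi), root_lift G u _ (hE4 j hj)]
      intro hcon
      exact h3' i j hi hj (fun hv => hij (Fin.ext hv))
        (congrArg (fun e => e.1.2) (Sum.inr.inj hcon))
    · intro i hcs
      have hi : (i : ℕ) < ps.length := hlen1 ▸ i.isLt
      rw [root_lift G u _ (hE4 i hi)]
      refine ⟨rfl, (h4' i hi hcs).2.1, ?_⟩
      exact lift_isPattern G _ u _ ((h4' i hi hcs).2.2) (hE4 i hi)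
        (fun q hq => hnt.1 _ (List.getElem_mem _) q hq)
        (noTotList_mem hnt.2 (List.getElem_mem _))

end Stmt17
namespace Stmt17

theorem noTotList_of_forall {V : Type} {l : List (VTree V)} (h : ∀ p ∈ l, p.noTot) :
    VTree.noTotList l := by
  induction l with
  | nil => trivial
  | cons q rest ih =>
    rw [VTree.noTotList]
    exact ⟨h _ (List.mem_cons_self), ih (fun p hp => h p (List.mem_cons_of_mem _ hp))⟩

theorem liftList_prjList {A : Type} (G : LGraph A) (v : G.V)
    (qs : List (VTree (transform G).V)) (h : ∀ q ∈ qs, lift G v (prj G q) = q) :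
    liftList G v (prjList G qs) = qs := by
  induction qs with
  | nil => rfl
  | cons q rest ih =>
    rw [prjList, liftList, h q (List.mem_cons_self),
      ih (fun p hp => h p (List.mem_cons_of_mem _ hp))]

theorem prj_isPattern {A : Type} (G : LGraph A) (t : LTree A) (q : VTree (transform G).V)
    (e : {p : G.V × G.V // G.E p.1 p.2})
    (hpat : isPattern (transform G) t q) (hroot : q.root = .inr e) :
    isPattern G t (prj G q) ∧ (prj G q).root = e.1.2 ∧
    (∀ r ∈ (prj G q).children, e.1.1 ≠ r.root) ∧ (prj G q).noTot ∧
    lift G e.1.1 (prj G q) = q := by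
  match t, q with
  | .node a cs, .node x qs =>
    simp only [VTree.root] at hroot
    subst hroot
    erw [isPattern.eq_1] at hpat
    obtain ⟨h1, h2, h3, h4⟩ := hpat
    simp only [List.get_eq_getElem] at h3 h4
    have h3' : ∀ i j, (hi : i < qs.length) → (hj : j < qs.length) → i ≠ j →
        qs[i].root ≠ qs[j].root := fun i j hi hj hne =>
      h3 ⟨i, hi⟩ ⟨j, hj⟩ (fun hc => hne (Fin.mk.inj_iff.mp hc))
    have h4' : ∀ i, (hi : i < qs.length) → (h : i < cs.length) →
        (transform G).E (.inr e) qs[i].root ∧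
        (transform G).le (.inr e) qs[i].root = cs[i].1 ∧
        isPattern (transform G) cs[i].2 qs[i] :=
      fun i hi h => h4 ⟨i, hi⟩ h
    have hcs : ∀ i, i < qs.length → i < cs.length := fun i hi => h2 ▸ hi
    have key : ∀ i, (hi : i < qs.length) → ∃ e' : {p : G.V × G.V // G.E p.1 p.2},
        qs[i].root = .inr e' ∧ e'.1.1 = e.1.2 ∧ e.1.1 ≠ e'.1.2 := by
      intro i hi
      have hE := (h4' i hi (hcs i hi)).1
      match hx : qs[i].root with
      | .inl w => rw [hx] at hE; exact absurd hE (fun h => h)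
      | .inr e' => rw [hx] at hE; exact ⟨e', rfl, hE.1, hE.2⟩
    have hrec : ∀ i, (hi : i < qs.length) →
        ∃ e' : {p : G.V × G.V // G.E p.1 p.2},
          qs[i].root = .inr e' ∧ e'.1.1 = e.1.2 ∧ e.1.1 ≠ e'.1.2 ∧
          isPattern G cs[i].2 (prj G qs[i]) ∧ (prj G qs[i]).root = e'.1.2 ∧
          (∀ r ∈ (prj G qs[i]).children, e'.1.1 ≠ r.root) ∧ (prj G qs[i]).noTot ∧
          lift G e'.1.1 (prj G qs[i]) = qs[i] := by
      intro i hi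
      obtain ⟨e', hx, he1, he2⟩ := key i hi
      obtain ⟨p1, p2, p3, p4, p5⟩ :=
        prj_isPattern G cs[i].2 qs[i] e' (h4' i hi (hcs i hi)).2.2 hx
      exact ⟨e', hx, he1, he2, p1, p2, p3, p4, p5⟩
    have recmem : ∀ q' ∈ qs, ∃ e' : {p : G.V × G.V // G.E p.1 p.2},
          q'.root = .inr e' ∧ e'.1.1 = e.1.2 ∧ e.1.1 ≠ e'.1.2 ∧
          (prj G q').root = e'.1.2 ∧
          (∀ r ∈ (prj G q').children, e'.1.1 ≠ r.root) ∧ (prj G q').noTot ∧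
          lift G e'.1.1 (prj G q') = q' := by
      intro q' hq'
      obtain ⟨i, hi, hq⟩ := List.mem_iff_getElem.mp hq'
      subst hq
      obtain ⟨e', hx, he1, he2, -, p2, p3, p4, p5⟩ := hrec i hi
      exact ⟨e', hx, he1, he2, p2, p3, p4, p5⟩
    erw [prj]
    simp only [vx]
    refine ⟨?_, rfl, ?_, ?_, ?_⟩
    · -- isPattern G t (prj ...)
      rw [isPattern]
      simp only [prjList_eq_map, List.get_eq_getElem, List.getElem_map]
      have hlen : (qs.map (prj G)).length = qs.length := List.length_map _
      have hlen1 : (prjList G qs).length = qs.length := by rw [prjList_eq_map]; exact hlen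
      refine ⟨h1, by rw [hlen]; exact h2, ?_, ?_⟩
      · intro i j hij
        have hi : (i : ℕ) < qs.length := hlen1 ▸ i.isLt
        have hj : (j : ℕ) < qs.length := hlen1 ▸ j.isLt
        obtain ⟨ei, hxi, hei1, -, -, pri, -, -, -⟩ := hrec ↑i hi
        obtain ⟨ej, hxj, hej1, -, -, prj', -, -, -⟩ := hrec ↑j hj
        rw [pri, prj']
        intro hc
        apply h3' ↑i ↑j hi hj (fun hv => hij (Fin.ext hv))
        rw [hxi, hxj]
        exact congrArg _ (Subtype.ext (Prod.ext (hei1.trans hej1.symm) hc))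
      · intro i hcsi
        have hi : (i : ℕ) < qs.length := hlen1 ▸ i.isLt
        obtain ⟨ei, hxi, hei1, -, pati, pri, -, -, -⟩ := hrec ↑i hi
        refine ⟨?_, ?_, pati⟩
        · rw [pri, ← hei1]; exact ei.2
        · rw [pri]
          have hle := (h4' ↑i hi hcsi).2.1
          rw [hxi] at hle
          rw [← hei1]
          exact hle
    · -- children condition
      intro r hr
      simp only [VTree.children] at hr
      rw [prjList_eq_map] at hr
      obtain ⟨q', hq', rfl⟩ := List.mem_map.mp hr
      obtain ⟨e', hx, he1, he2, pr, -, -, -⟩ := recmem q' hq'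
      rw [pr]
      exact he2
    · -- noTot
      rw [VTree.noTot]
      constructor
      · intro p hp r hr
        rw [prjList_eq_map] at hp
        obtain ⟨q', hq', rfl⟩ := List.mem_map.mp hp
        obtain ⟨e', hx, he1, he2, -, hch', -, -⟩ := recmem q' hq'
        have := hch' r hr
        rw [he1] at this
        exact this
      · apply noTotList_of_forall
        intro p hp
        rw [prjList_eq_map] at hp
        obtain ⟨q', hq', rfl⟩ := List.mem_map.mp hp
        obtain ⟨e', hx, he1, he2, -, -, hnt', -⟩ := recmem q' hq'
        exact hnt'
    · -- lift equation
      rw [lift]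
      have hEuv : G.E e.1.1 e.1.2 := e.2
      erw [dif_pos hEuv]
      have hll : liftList G e.1.2 (prjList G qs) = qs := by
        apply liftList_prjList
        intro q' hq'
        obtain ⟨e', hx, he1, he2, -, -, -, hl⟩ := recmem q' hq'
        rw [← he1]
        exact hl
      rw [hll]
termination_by sizeOf t
decreasing_by
  all_goals
    simp only [LTree.node.sizeOf_spec]
    have h5 : sizeOf cs[(i : ℕ)] < sizeOf cs := List.sizeOf_lt_of_mem (List.getElem_mem _)
    have h6 := snd_sizeOf_lt cs[(i : ℕ)]
    omega

end Stmt17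
namespace Stmt17

theorem prj_isPattern_root {A : Type} (G : LGraph A) (t : LTree A)
    (q : VTree (transform G).V) (v : G.V)
    (hpat : isPattern (transform G) t q) (hroot : q.root = .inl v) :
    isPattern G t (prj G q) ∧ (prj G q).noTot ∧ (prj G q).root = v ∧
    liftRoot G (prj G q) = q := by
  match t, q with
  | .node a cs, .node x qs =>
    simp only [VTree.root] at hroot
    subst hroot
    erw [isPattern.eq_1] at hpat
    obtain ⟨h1, h2, h3, h4⟩ := hpat
    simp only [List.get_eq_getElem] at h3 h4
    have h3' : ∀ i j, (hi : i < qs.length) → (hj : j < qs.length) → i ≠ j →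
        qs[i].root ≠ qs[j].root := fun i j hi hj hne =>
      h3 ⟨i, hi⟩ ⟨j, hj⟩ (fun hc => hne (Fin.mk.inj_iff.mp hc))
    have h4' : ∀ i, (hi : i < qs.length) → (h : i < cs.length) →
        (transform G).E (.inl v) qs[i].root ∧
        (transform G).le (.inl v) qs[i].root = cs[i].1 ∧
        isPattern (transform G) cs[i].2 qs[i] :=
      fun i hi h => h4 ⟨i, hi⟩ h
    have hcs : ∀ i, i < qs.length → i < cs.length := fun i hi => h2 ▸ hi
    have key : ∀ i, (hi : i < qs.length) → ∃ e' : {p : G.V × G.V // G.E p.1 p.2},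
        qs[i].root = .inr e' ∧ e'.1.1 = v := by
      intro i hi
      have hE := (h4' i hi (hcs i hi)).1
      match hx : qs[i].root with
      | .inl w => rw [hx] at hE; exact absurd hE (fun h => h)
      | .inr e' => rw [hx] at hE; exact ⟨e', rfl, hE⟩
    have hrec : ∀ i, (hi : i < qs.length) →
        ∃ e' : {p : G.V × G.V // G.E p.1 p.2},
          qs[i].root = .inr e' ∧ e'.1.1 = v ∧
          isPattern G cs[i].2 (prj G qs[i]) ∧ (prj G qs[i]).root = e'.1.2 ∧
          (∀ r ∈ (prj G qs[i]).children, e'.1.1 ≠ r.root) ∧ (prj G qs[i]).noTot ∧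
          lift G e'.1.1 (prj G qs[i]) = qs[i] := by
      intro i hi
      obtain ⟨e', hx, he1⟩ := key i hi
      obtain ⟨p1, p2, p3, p4, p5⟩ :=
        prj_isPattern G cs[i].2 qs[i] e' (h4' i hi (hcs i hi)).2.2 hx
      exact ⟨e', hx, he1, p1, p2, p3, p4, p5⟩
    have recmem : ∀ q' ∈ qs, ∃ e' : {p : G.V × G.V // G.E p.1 p.2},
          q'.root = .inr e' ∧ e'.1.1 = v ∧ (prj G q').root = e'.1.2 ∧
          (∀ r ∈ (prj G q').children, e'.1.1 ≠ r.root) ∧ (prj G q').noTot ∧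
          lift G e'.1.1 (prj G q') = q' := by
      intro q' hq'
      obtain ⟨i, hi, hq⟩ := List.mem_iff_getElem.mp hq'
      subst hq
      obtain ⟨e', hx, he1, -, p2, p3, p4, p5⟩ := hrec i hi
      exact ⟨e', hx, he1, p2, p3, p4, p5⟩
    erw [prj]
    simp only [vx]
    refine ⟨?_, ?_, rfl, ?_⟩
    · rw [isPattern]
      simp only [prjList_eq_map, List.get_eq_getElem, List.getElem_map]
      have hlen : (qs.map (prj G)).length = qs.length := List.length_map _
      have hlen1 : (prjList G qs).length = qs.length := by rw [prjList_eq_map]; exact hlen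
      refine ⟨h1, by rw [hlen]; exact h2, ?_, ?_⟩
      · intro i j hij
        have hi : (i : ℕ) < qs.length := hlen1 ▸ i.isLt
        have hj : (j : ℕ) < qs.length := hlen1 ▸ j.isLt
        obtain ⟨ei, hxi, hei1, -, pri, -, -, -⟩ := hrec ↑i hi
        obtain ⟨ej, hxj, hej1, -, prj', -, -, -⟩ := hrec ↑j hj
        rw [pri, prj']
        intro hc
        apply h3' ↑i ↑j hi hj (fun hv => hij (Fin.ext hv))
        rw [hxi, hxj]
        exact congrArg _ (Subtype.ext (Prod.ext (hei1.trans hej1.symm) hc))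
      · intro i hcsi
        have hi : (i : ℕ) < qs.length := hlen1 ▸ i.isLt
        obtain ⟨ei, hxi, hei1, pati, pri, -, -, -⟩ := hrec ↑i hi
        refine ⟨?_, ?_, pati⟩
        · rw [pri, ← hei1]; exact ei.2
        · rw [pri]
          have hle := (h4' ↑i hi hcsi).2.1
          rw [hxi] at hle
          rw [← hei1]
          exact hle
    · rw [VTree.noTot]
      constructor
      · intro p hp r hr
        rw [prjList_eq_map] at hp
        obtain ⟨q', hq', rfl⟩ := List.mem_map.mp hp
        obtain ⟨e', hx, he1, -, hch', -, -⟩ := recmem q' hq'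
        have := hch' r hr
        rw [he1] at this
        exact this
      · apply noTotList_of_forall
        intro p hp
        rw [prjList_eq_map] at hp
        obtain ⟨q', hq', rfl⟩ := List.mem_map.mp hp
        obtain ⟨e', hx, he1, -, -, hnt', -⟩ := recmem q' hq'
        exact hnt'
    · rw [liftRoot]
      have hll : liftList G v (prjList G qs) = qs := by
        apply liftList_prjList
        intro q' hq'
        obtain ⟨e', hx, he1, -, -, -, hl⟩ := recmem q' hq'
        rw [← he1]
        exact hl
      rw [hll]

end Stmt17
namespace Stmt17

def listPatSet {A : Type} (G : LGraph A) (cs : List (A × LTree A)) :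
    Set (List (VTree G.V)) :=
  {l | l.length = cs.length ∧ ∀ i, (hi : i < l.length) → (h : i < cs.length) →
    isPattern G cs[i].2 l[i]}

mutual

theorem finite_patterns {A : Type} (G : LGraph A) (t : LTree A) :
    {p : VTree G.V | isPattern G t p}.Finite := by
  match t with
  | .node a cs =>
    have hl := finite_patternsList G cs
    apply Set.Finite.subset (((Set.finite_univ (α := G.V)).prod hl).image
      (fun pr => VTree.node pr.1 pr.2))
    intro p hp
    match p with
    | .node u ps =>
      rw [Set.mem_setOf_eq, isPattern] at hp
      obtain ⟨-, h2, -, h4⟩ := hp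
      simp only [List.get_eq_getElem] at h4
      refine ⟨(u, ps), ⟨Set.mem_univ _, h2, ?_⟩, rfl⟩
      intro i hi h
      exact (h4 ⟨i, hi⟩ h).2.2
termination_by sizeOf t

theorem finite_patternsList {A : Type} (G : LGraph A) (cs : List (A × LTree A)) :
    (listPatSet G cs).Finite := by
  match cs with
  | [] =>
    apply Set.Finite.subset (Set.finite_singleton ([] : List (VTree G.V)))
    intro l hl
    obtain ⟨h1, -⟩ := hl
    exact List.length_eq_zero_iff.mp h1
  | c :: cs' =>
    have h1 := finite_patterns G c.2
    have h2 := finite_patternsList G cs'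
    apply Set.Finite.subset ((h1.prod h2).image (fun pr => pr.1 :: pr.2))
    rintro l ⟨hlen, hall⟩
    match l with
    | [] => simp at hlen
    | p :: l' =>
      refine ⟨(p, l'), ⟨?_, ?_, ?_⟩, rfl⟩
      · exact hall 0 (by simp) (by simp)
      · simpa using hlen
      · intro i hi h
        have := hall (i + 1) (by simpa using Nat.succ_lt_succ hi)
          (by simpa using Nat.succ_lt_succ h)
        simpa using this
termination_by sizeOf cs
decreasing_by
  · have := snd_sizeOf_lt c
    simp only [List.cons.sizeOf_spec]
    omega
  · simp only [List.cons.sizeOf_spec]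
    omega

end

end Stmt17


/-- For every tree `t`, the number of no-tottering tree-patterns of `G` with respect
to `t` equals the number of tree-patterns of the transformed graph `G'` with respect
to `t` whose root is mapped into (the copy of) `V_G`:
`ψ_t^{NT}(G) = Σ_{v ∈ V_G} ψ_t^{(v)}(G')`. -/
theorem stmt_17 {A : Type} (G : LGraph A) (t : LTree A) :
    psiNT G t = ∑ v : G.V, psiRoot (transform G) t (Sum.inl v) := by
  classical
  set S : Set (VTree G.V) := {p | isPattern G t p ∧ p.noTot} with hS
  set U : Set (VTree (transform G).V) :=
    {q | isPattern (transform G) t q ∧ ∃ v, q.root = Sum.inl v} with hUdef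
  have hinj : Set.InjOn (Stmt17.liftRoot G) S := by
    intro p _ q _ h
    have := congrArg (Stmt17.prj G) h
    rwa [Stmt17.prj_liftRoot, Stmt17.prj_liftRoot] at this
  have himg : Stmt17.liftRoot G '' S = U := by
    ext q
    constructor
    · rintro ⟨p, ⟨hp, hnt⟩, rfl⟩
      refine ⟨Stmt17.liftRoot_isPattern G t p hp hnt, ?_⟩
      cases p with
      | node u ps => exact ⟨u, rfl⟩
    · rintro ⟨hq, v, hv⟩
      obtain ⟨p1, p2, -, p4⟩ := Stmt17.prj_isPattern_root G t q v hq hv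
      exact ⟨Stmt17.prj G q, ⟨p1, p2⟩, p4⟩
  have hU : U.Finite :=
    (Stmt17.finite_patterns (transform G) t).subset (fun q hq => hq.1)
  have hUv : ∀ v : G.V,
      {q : VTree (transform G).V | isPattern (transform G) t q ∧
        q.root = Sum.inl v}.Finite :=
    fun v => (Stmt17.finite_patterns (transform G) t).subset (fun q hq => hq.1)
  have hsplit : hU.toFinset = Finset.univ.biUnion (fun v => (hUv v).toFinset) := by
    ext q
    simp only [Set.Finite.mem_toFinset, Finset.mem_biUnion, Finset.mem_univ, true_and,
      Set.mem_setOf_eq, hUdef]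
    constructor
    · rintro ⟨hq, v, hv⟩; exact ⟨v, hq, hv⟩
    · rintro ⟨v, hq, hv⟩; exact ⟨hq, v, hv⟩
  have hdisj : ∀ v ∈ (Finset.univ : Finset G.V), ∀ w ∈ (Finset.univ : Finset G.V),
      v ≠ w → Disjoint ((hUv v).toFinset) ((hUv w).toFinset) := by
    intro v _ w _ hvw
    rw [Finset.disjoint_left]
    intro q hq hq'
    rw [Set.Finite.mem_toFinset] at hq hq'
    exact hvw (Sum.inl.inj (hq.2.symm.trans hq'.2))
  calc psiNT G t = S.ncard := rfl
    _ = (Stmt17.liftRoot G '' S).ncard := (Set.ncard_image_of_injOn hinj).symm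
    _ = U.ncard := by rw [himg]
    _ = hU.toFinset.card := Set.ncard_eq_toFinset_card _ hU
    _ = ∑ v : G.V, ((hUv v).toFinset).card := by rw [hsplit, Finset.card_biUnion hdisj]
    _ = ∑ v : G.V, psiRoot (transform G) t (Sum.inl v) := by
        refine Finset.sum_congr rfl (fun v _ => ?_)
        unfold psiRoot; exact (Set.ncard_eq_toFinset_card _ (hUv v)).symm
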